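/- arXiv:2008.07296 — 2 statements merged into one kernel-verified Lean document; each statement's English description precedes it below -/
import Mathlib

section
/- Let (a_n : n ∈ ℕ) be a sequence of positive reals with a_n → ∞, (a_{n+1} − a_n) of bounded variation (i.e. Σ_n |a_{n+2} − 2a_{n+1} + a_n| < ∞), and (1/√a_n) of bounded variation. Then the sequence (√(a_{n+1}/a_n)) is of bounded variation and converges to 1. -/
/-- A real sequence is of bounded variation (class 𝒟₁). -/
def BoundedVariation (x : ℕ → ℝ) : Prop :=
  Summable fun n => |x (n + 1) - x n|

open Filter

/-- A bounded-variation sequence is bounded. -/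
lemma bv_abs_le (x : ℕ → ℝ) (h : Summable fun n => |x (n + 1) - x n|) (n : ℕ) :
    |x n| ≤ |x 0| + ∑' k, |x (k + 1) - x k| := by
  have h1 : x n = x 0 + ∑ k ∈ Finset.range n, (x (k + 1) - x k) := by
    rw [Finset.sum_range_sub]; ring
  calc |x n| ≤ |x 0| + |∑ k ∈ Finset.range n, (x (k + 1) - x k)| := by
        rw [h1]; exact abs_add_le _ _
    _ ≤ |x 0| + ∑ k ∈ Finset.range n, |x (k + 1) - x k| :=
        add_le_add le_rfl (Finset.abs_sum_le_sum_abs _ _)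
    _ ≤ |x 0| + ∑' k, |x (k + 1) - x k| :=
        add_le_add le_rfl (Summable.sum_le_tsum _ (fun k _ => abs_nonneg _) h)

set_option maxHeartbeats 1000000 in
lemma aux_sqrt_ratio (b : ℕ → ℝ) (hb : ∀ n, 0 < b n)
    (hbtop : Tendsto b atTop atTop)
    (hd : Summable fun n => |(b (n + 2) ^ 2 - b (n + 1) ^ 2) - (b (n + 1) ^ 2 - b n ^ 2)|)
    (hu : Summable fun n => |1 / b (n + 1) - 1 / b n|) :
    (Summable fun n => |b (n + 2) / b (n + 1) - b (n + 1) / b n|) ∧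
      Tendsto (fun n => b (n + 1) / b n) atTop (nhds 1) := by
  have hbne : ∀ n, b n ≠ 0 := fun n => (hb n).ne'
  have hspos : ∀ n, 0 < b n + b (n + 1) := fun n => add_pos (hb n) (hb (n + 1))
  have hsne : ∀ n, b n + b (n + 1) ≠ 0 := fun n => (hspos n).ne'
  -- u n := 1 / b n tends to 0
  have hu0 : Tendsto (fun n => 1 / b n) atTop (nhds 0) := by
    simp only [one_div]; exact hbtop.inv_tendsto_atTop
  -- bound on u
  obtain ⟨Cu', hCu'⟩ := hu0.bddAbove_range
  set Cu : ℝ := max Cu' 1 with hCudef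
  have hCu : ∀ n, 1 / b n ≤ Cu := fun n =>
    le_trans (hCu' (Set.mem_range_self n)) (le_max_left _ _)
  have hCupos : (0 : ℝ) < Cu := lt_of_lt_of_le one_pos (le_max_right _ _)
  -- bound on d n := b(n+1)^2 - b n^2
  set M : ℝ := |b 1 ^ 2 - b 0 ^ 2| +
      ∑' k, |(b (k + 2) ^ 2 - b (k + 1) ^ 2) - (b (k + 1) ^ 2 - b k ^ 2)| with hMdef
  have hM : ∀ n, |b (n + 1) ^ 2 - b n ^ 2| ≤ M := fun n =>
    bv_abs_le (fun m => b (m + 1) ^ 2 - b m ^ 2) hd n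
  have hMpos : 0 ≤ M := le_trans (abs_nonneg _) (hM 0)
  -- identity : |1/b(m+1) - 1/b m| = |b (m+1) - b m| / (b m * b (m+1))
  have hid : ∀ m, |1 / b (m + 1) - 1 / b m| = |b (m + 1) - b m| / (b m * b (m + 1)) := by
    intro m
    have h0 : 1 / b (m + 1) - 1 / b m = (b m - b (m + 1)) / (b m * b (m + 1)) := by
      rw [div_sub_div _ _ (hbne (m + 1)) (hbne m), one_mul, mul_one,
        mul_comm (b (m + 1)) (b m)]
    rw [h0, abs_div, abs_of_pos (mul_pos (hb m) (hb (m + 1))), abs_sub_comm]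
  -- e n = d n * t n
  have he_eq : ∀ n, b (n + 1) - b n =
      (b (n + 1) ^ 2 - b n ^ 2) * (1 / (b n + b (n + 1))) := by
    intro n
    rw [mul_one_div, eq_div_iff (hsne n)]
    ring
  -- bound on t
  have htpos : ∀ n, 0 < 1 / (b n + b (n + 1)) := fun n => one_div_pos.mpr (hspos n)
  have htb : ∀ n, 1 / (b n + b (n + 1)) ≤ Cu := by
    intro n
    refine le_trans ?_ (hCu n)
    exact one_div_le_one_div_of_le (hb n) (le_add_of_nonneg_right (hb (n + 1)).le)
  -- bound on e
  have heb : ∀ n, |b (n + 1) - b n| ≤ M * (1 / (b n + b (n + 1))) := by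
    intro n
    rw [he_eq n, abs_mul, abs_of_pos (htpos n)]
    exact mul_le_mul_of_nonneg_right (hM n) (htpos n).le
  have hebCu : ∀ n, |b (n + 1) - b n| ≤ M * Cu := fun n =>
    le_trans (heb n) (mul_le_mul_of_nonneg_left (htb n) hMpos)
  -- shifted hu
  have hu1 : Summable fun n => |1 / b (n + 2) - 1 / b (n + 1)| :=
    (summable_nat_add_iff 1).mpr hu
  -- t is BV
  have ht : Summable fun n => |1 / (b (n + 1) + b (n + 2)) - 1 / (b n + b (n + 1))| := by
    apply Summable.of_nonneg_of_le (fun n => abs_nonneg _) _ (hu.add hu1)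
    intro n
    have h1 : 1 / (b (n + 1) + b (n + 2)) - 1 / (b n + b (n + 1)) =
        ((b n + b (n + 1)) - (b (n + 1) + b (n + 2))) /
          ((b n + b (n + 1)) * (b (n + 1) + b (n + 2))) := by
      rw [div_sub_div _ _ (hsne (n + 1)) (hsne n), one_mul, mul_one,
        mul_comm (b (n + 1) + b (n + 2)) (b n + b (n + 1))]
    have hP : 0 < (b n + b (n + 1)) * (b (n + 1) + b (n + 2)) :=
      mul_pos (hspos n) (hspos (n + 1))
    rw [h1, abs_div, abs_of_pos hP]
    have h2 : |(b n + b (n + 1)) - (b (n + 1) + b (n + 2))| ≤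
        |b (n + 1) - b n| + |b (n + 2) - b (n + 1)| := by
      have h3 : (b n + b (n + 1)) - (b (n + 1) + b (n + 2)) =
          -(b (n + 1) - b n) + -(b (n + 2) - b (n + 1)) := by ring
      rw [h3]
      refine le_trans (abs_add_le _ _) ?_
      rw [abs_neg, abs_neg]
    calc |(b n + b (n + 1)) - (b (n + 1) + b (n + 2))| /
          ((b n + b (n + 1)) * (b (n + 1) + b (n + 2)))
        ≤ (|b (n + 1) - b n| + |b (n + 2) - b (n + 1)|) /
          ((b n + b (n + 1)) * (b (n + 1) + b (n + 2))) :=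
          (div_le_div_iff_of_pos_right hP).mpr h2
      _ = |b (n + 1) - b n| / ((b n + b (n + 1)) * (b (n + 1) + b (n + 2))) +
          |b (n + 2) - b (n + 1)| / ((b n + b (n + 1)) * (b (n + 1) + b (n + 2))) :=
          add_div _ _ _
      _ ≤ |b (n + 1) - b n| / (b n * b (n + 1)) +
          |b (n + 2) - b (n + 1)| / (b (n + 1) * b (n + 2)) := by
          refine add_le_add ?_ ?_
          · refine div_le_div_of_nonneg_left (abs_nonneg _)
              (mul_pos (hb n) (hb (n + 1))) ?_
            exact mul_le_mul (le_add_of_nonneg_right (hb (n + 1)).le)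
              (le_add_of_nonneg_right (hb (n + 2)).le) (hb (n + 1)).le (hspos n).le
          · refine div_le_div_of_nonneg_left (abs_nonneg _)
              (mul_pos (hb (n + 1)) (hb (n + 2))) ?_
            exact mul_le_mul (le_add_of_nonneg_left (hb n).le)
              (le_add_of_nonneg_left (hb (n + 1)).le) (hb (n + 2)).le (hspos n).le
      _ = |1 / b (n + 1) - 1 / b n| + |1 / b (n + 2) - 1 / b (n + 1)| := by
          rw [hid n, hid (n + 1)]
  -- e is BV
  have he : Summable fun n => |(b (n + 2) - b (n + 1)) - (b (n + 1) - b n)| := by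
    apply Summable.of_nonneg_of_le (fun n => abs_nonneg _) _
      ((ht.mul_right M).add (hd.mul_right Cu))
    intro n
    rw [he_eq n, he_eq (n + 1)]
    have key : (b (n + 2) ^ 2 - b (n + 1) ^ 2) * (1 / (b (n + 1) + b (n + 2))) -
        (b (n + 1) ^ 2 - b n ^ 2) * (1 / (b n + b (n + 1))) =
        (1 / (b (n + 1) + b (n + 2)) - 1 / (b n + b (n + 1))) *
          (b (n + 2) ^ 2 - b (n + 1) ^ 2) +
        ((b (n + 2) ^ 2 - b (n + 1) ^ 2) - (b (n + 1) ^ 2 - b n ^ 2)) *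
          (1 / (b n + b (n + 1))) := by ring
    rw [key]
    refine le_trans (abs_add_le _ _) ?_
    rw [abs_mul, abs_mul]
    refine add_le_add ?_ ?_
    · exact mul_le_mul_of_nonneg_left (hM (n + 1)) (abs_nonneg _)
    · refine mul_le_mul_of_nonneg_left ?_ (abs_nonneg _)
      rw [abs_of_pos (htpos n)]
      exact htb n
  -- bounded variation of the ratio
  have hsum : Summable fun n => |b (n + 2) / b (n + 1) - b (n + 1) / b n| := by
    apply Summable.of_nonneg_of_le (fun n => abs_nonneg _) _
      ((he.mul_right Cu).add (hu.mul_right (M * Cu)))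
    intro n
    have key : b (n + 2) / b (n + 1) - b (n + 1) / b n =
        ((b (n + 2) - b (n + 1)) - (b (n + 1) - b n)) * (1 / b (n + 1)) -
        ((b (n + 1) - b n) / (b n * b (n + 1))) * (b (n + 1) - b n) := by
      field_simp [hbne n, hbne (n + 1)]
      ring
    have e2 : |(b (n + 1) - b n) / (b n * b (n + 1))| = |1 / b (n + 1) - 1 / b n| := by
      rw [abs_div, abs_of_pos (mul_pos (hb n) (hb (n + 1))), ← hid n]
    calc |b (n + 2) / b (n + 1) - b (n + 1) / b n|
        ≤ |((b (n + 2) - b (n + 1)) - (b (n + 1) - b n)) * (1 / b (n + 1))| +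
          |((b (n + 1) - b n) / (b n * b (n + 1))) * (b (n + 1) - b n)| := by
          rw [key]; exact abs_sub _ _
      _ = |(b (n + 2) - b (n + 1)) - (b (n + 1) - b n)| * |1 / b (n + 1)| +
          |1 / b (n + 1) - 1 / b n| * |b (n + 1) - b n| := by
          rw [abs_mul, abs_mul, e2]
      _ ≤ |(b (n + 2) - b (n + 1)) - (b (n + 1) - b n)| * Cu +
          |1 / b (n + 1) - 1 / b n| * (M * Cu) := by
          refine add_le_add ?_ ?_
          · refine mul_le_mul_of_nonneg_left ?_ (abs_nonneg _)
            rw [abs_of_pos (one_div_pos.mpr (hb (n + 1)))]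
            exact hCu (n + 1)
          · exact mul_le_mul_of_nonneg_left (hebCu n) (abs_nonneg _)
  -- convergence to 1
  have htend : Tendsto (fun n => b (n + 1) / b n) atTop (nhds 1) := by
    have heq : (fun n => b (n + 1) / b n) =
        fun n => 1 + (b (n + 1) - b n) * (1 / b n) := by
      funext n; field_simp [hbne n]; ring
    rw [heq]
    have h0 : Tendsto (fun n => (b (n + 1) - b n) * (1 / b n)) atTop (nhds 0) := by
      apply squeeze_zero_norm (a := fun n => (M * Cu) * (1 / b n))
      · intro n
        rw [Real.norm_eq_abs, abs_mul, abs_of_pos (one_div_pos.mpr (hb n))]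
        exact mul_le_mul_of_nonneg_right (hebCu n) (one_div_pos.mpr (hb n)).le
      · simpa using (hu0.const_mul (M * Cu))
    simpa using tendsto_const_nhds.add h0
  exact ⟨hsum, htend⟩

theorem sqrt_ratio_bounded_variation
    (a : ℕ → ℝ) (hpos : ∀ n, 0 < a n)
    (hinf : Filter.Tendsto a Filter.atTop Filter.atTop)
    (hdiff : BoundedVariation fun n => a (n + 1) - a n)
    (hinv : BoundedVariation fun n => 1 / Real.sqrt (a n)) :
    BoundedVariation (fun n => Real.sqrt (a (n + 1) / a n)) ∧
      Filter.Tendsto (fun n => Real.sqrt (a (n + 1) / a n)) Filter.atTop (nhds 1) := by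
  have hsq : ∀ n, Real.sqrt (a n) ^ 2 = a n := fun n => Real.sq_sqrt (hpos n).le
  have hb : ∀ n, 0 < Real.sqrt (a n) := fun n => Real.sqrt_pos.mpr (hpos n)
  have hbtop : Tendsto (fun n => Real.sqrt (a n)) atTop atTop := by
    rw [Filter.tendsto_atTop]
    intro C
    filter_upwards [hinf.eventually_ge_atTop (C ^ 2)] with n hn
    calc C ≤ |C| := le_abs_self C
      _ = Real.sqrt (C ^ 2) := (Real.sqrt_sq_eq_abs C).symm
      _ ≤ Real.sqrt (a n) := Real.sqrt_le_sqrt hn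
  have hd : Summable fun n =>
      |(Real.sqrt (a (n + 2)) ^ 2 - Real.sqrt (a (n + 1)) ^ 2) -
        (Real.sqrt (a (n + 1)) ^ 2 - Real.sqrt (a n) ^ 2)| := by
    have h' : Summable fun n => |a (n + 2) - a (n + 1) - (a (n + 1) - a n)| := hdiff
    simpa only [hsq] using h'
  have hu : Summable fun n => |1 / Real.sqrt (a (n + 1)) - 1 / Real.sqrt (a n)| := hinv
  obtain ⟨h1, h2⟩ := aux_sqrt_ratio (fun n => Real.sqrt (a n)) hb hbtop hd hu
  have heq : ∀ n, Real.sqrt (a (n + 1) / a n) =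
      Real.sqrt (a (n + 1)) / Real.sqrt (a n) := fun n =>
    Real.sqrt_div (hpos (n + 1)).le _
  constructor
  · unfold BoundedVariation
    simp only [heq]
    exact h1
  · simp only [heq]
    exact h2
end

section
/- Let (a_n : n ∈ ℕ) be a sequence of positive reals with a_n → ∞, (a_{n+1} − a_n) of bounded variation, and (1/√a_n) of bounded variation. Then the sequence (a_n(1/√a_n − 1/√a_{n+1})) is of bounded variation and converges to 0. -/
open Filter Real

lemma bv_cauchy {x : ℕ → ℝ} (h : BoundedVariation x) : CauchySeq x := by
  have h' : Summable fun n => |x n - x (n + 1)| := h.congr fun n => abs_sub_comm _ _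
  exact cauchySeq_of_summable_dist (by simpa [Real.dist_eq] using h')

lemma bv_bounded {x : ℕ → ℝ} (h : BoundedVariation x) : ∃ C, ∀ n, |x n| ≤ C := by
  obtain ⟨C, hC⟩ := Metric.isBounded_iff.mp (bv_cauchy h).isBounded_range
  refine ⟨|x 0| + C, fun n => ?_⟩
  have h1 : |x 0 - x n| ≤ C := by
    simpa [Real.dist_eq] using hC ⟨0, rfl⟩ ⟨n, rfl⟩
  have h2 : |x n| - |x 0| ≤ |x n - x 0| := abs_sub_abs_le_abs_sub _ _
  have h3 : |x n - x 0| = |x 0 - x n| := abs_sub_comm _ _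
  linarith

lemma bv_tendsto {x : ℕ → ℝ} (h : BoundedVariation x) :
    ∃ L, Tendsto x atTop (nhds L) :=
  cauchySeq_tendsto_of_complete (bv_cauchy h)

lemma bv_shift {x : ℕ → ℝ} (h : BoundedVariation x) :
    BoundedVariation (fun n => x (n + 1)) := by
  have := (summable_nat_add_iff (f := fun n => |x (n + 1) - x n|) 1).mpr h
  exact this.congr fun n => by norm_num

lemma bv_mul {x y : ℕ → ℝ} (hx : BoundedVariation x) (hy : BoundedVariation y) :
    BoundedVariation (fun n => x n * y n) := by
  obtain ⟨Cx, hCx⟩ := bv_bounded hx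
  obtain ⟨Cy, hCy⟩ := bv_bounded hy
  refine Summable.of_nonneg_of_le (fun n => abs_nonneg _)
    (fun n => ?_) (((hy.mul_left Cx).add (hx.mul_left Cy)))
  have key : x (n+1) * y (n+1) - x n * y n
      = x (n+1) * (y (n+1) - y n) + y n * (x (n+1) - x n) := by ring
  calc |x (n+1) * y (n+1) - x n * y n|
      ≤ |x (n+1) * (y (n+1) - y n)| + |y n * (x (n+1) - x n)| := by
        rw [key]; exact abs_add_le _ _
    _ ≤ Cx * |y (n+1) - y n| + Cy * |x (n+1) - x n| := by
        rw [abs_mul, abs_mul]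
        exact add_le_add (mul_le_mul_of_nonneg_right (hCx _) (abs_nonneg _))
          (mul_le_mul_of_nonneg_right (hCy _) (abs_nonneg _))

theorem inv_sqrt_scaled_diff_bounded_variation
    (a : ℕ → ℝ) (hpos : ∀ n, 0 < a n)
    (hinf : Filter.Tendsto a Filter.atTop Filter.atTop)
    (hdiff : BoundedVariation fun n => a (n + 1) - a n)
    (hinv : BoundedVariation fun n => 1 / Real.sqrt (a n)) :
    BoundedVariation (fun n => a n * (1 / Real.sqrt (a n) - 1 / Real.sqrt (a (n + 1)))) ∧
      Filter.Tendsto (fun n => a n * (1 / Real.sqrt (a n) - 1 / Real.sqrt (a (n + 1))))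
        Filter.atTop (nhds 0) := by
  set s : ℕ → ℝ := fun n => Real.sqrt (a n) with hs
  have hspos : ∀ n, 0 < s n := fun n => Real.sqrt_pos.mpr (hpos n)
  have hsq : ∀ n, s n * s n = a n := fun n => Real.mul_self_sqrt (hpos n).le
  have hsqrt_top : Tendsto Real.sqrt atTop atTop := by
    refine tendsto_atTop_atTop.mpr fun b => ⟨b ^ 2 ⊔ 0, fun x hx => ?_⟩
    have h1 : Real.sqrt (b ^ 2) ≤ Real.sqrt x :=
      Real.sqrt_le_sqrt ((le_sup_left).trans hx)
    have h2 : b ≤ Real.sqrt (b ^ 2) := by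
      rw [Real.sqrt_sq_eq_abs]; exact le_abs_self b
    linarith
  have hs_top : Tendsto s atTop atTop := hsqrt_top.comp hinf
  set u : ℕ → ℝ := fun n => 1 / s n with hu
  have hu_bv : BoundedVariation u := hinv
  have hu0 : Tendsto u atTop (nhds 0) := by
    simpa [hu, one_div, Pi.inv_def] using hs_top.inv_tendsto_atTop
  set c : ℕ → ℝ := fun n => s (n + 1) - s n with hc
  have hudiff : ∀ n, u (n + 1) - u n = -(c n) / (s n * s (n + 1)) := by
    intro n
    simp only [hu, hc]
    rw [div_sub_div _ _ (hspos (n+1)).ne' (hspos n).ne',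
      div_eq_div_iff (mul_pos (hspos (n+1)) (hspos n)).ne'
        (mul_pos (hspos n) (hspos (n+1))).ne']
    ring
  set t : ℕ → ℝ := fun n => s n + s (n + 1) with ht
  have htpos : ∀ n, 0 < t n := fun n => add_pos (hspos n) (hspos (n+1))
  set v : ℕ → ℝ := fun n => 1 / t n with hv
  have hv_bv : BoundedVariation v := by
    refine Summable.of_nonneg_of_le (fun n => abs_nonneg _) (fun n => ?_)
      (hu_bv.add (bv_shift hu_bv))
    have htt : 0 < t n * t (n + 1) := mul_pos (htpos n) (htpos (n+1))
    have hvd : v (n + 1) - v n = -(c n + c (n + 1)) / (t n * t (n + 1)) := by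
      have h1 : t n - t (n + 1) = -(c n + c (n + 1)) := by
        simp only [ht, hc]; ring
      simp only [hv]
      rw [div_sub_div _ _ (htpos (n+1)).ne' (htpos n).ne',
        div_eq_div_iff (mul_pos (htpos (n+1)) (htpos n)).ne' htt.ne']
      linear_combination (t n * t (n+1)) * h1
    rw [hvd, abs_div, abs_neg, abs_of_pos htt]
    have hst1 : s n ≤ t n := le_add_of_nonneg_right (hspos (n+1)).le
    have hst2 : s (n+1) ≤ t (n+1) := le_add_of_nonneg_right (hspos (n+2)).le
    have hst3 : s (n+1) ≤ t n := le_add_of_nonneg_left (hspos n).le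
    have hst4 : s (n+2) ≤ t (n+1) := le_add_of_nonneg_left (hspos (n+1)).le
    have h2 : |c n| / (t n * t (n+1)) ≤ |c n| / (s n * s (n+1)) :=
      div_le_div_of_nonneg_left (abs_nonneg _) (mul_pos (hspos n) (hspos (n+1)))
        (mul_le_mul hst1 hst2 (hspos (n+1)).le (htpos n).le)
    have h3 : |c (n+1)| / (t n * t (n+1)) ≤ |c (n+1)| / (s (n+1) * s (n+2)) :=
      div_le_div_of_nonneg_left (abs_nonneg _) (mul_pos (hspos (n+1)) (hspos (n+2)))
        (mul_le_mul hst3 hst4 (hspos (n+2)).le (htpos n).le)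
    have e2 : |c n| / (s n * s (n+1)) = |u (n+1) - u n| := by
      rw [hudiff n, abs_div, abs_neg,
        abs_of_pos (mul_pos (hspos n) (hspos (n+1)))]
    have e3 : |c (n+1)| / (s (n+1) * s (n+2)) = |u (n+2) - u (n+1)| := by
      rw [hudiff (n+1), abs_div, abs_neg,
        abs_of_pos (mul_pos (hspos (n+1)) (hspos (n+2)))]
    calc |c n + c (n+1)| / (t n * t (n+1))
        ≤ |c n| / (t n * t (n+1)) + |c (n+1)| / (t n * t (n+1)) := by
          rw [← add_div]; gcongr; exact abs_add_le _ _
      _ ≤ |u (n+1) - u n| + |u (n+2) - u (n+1)| := by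
          rw [← e2, ← e3]; exact add_le_add h2 h3
  have ht_top : Tendsto t atTop atTop :=
    tendsto_atTop_mono (fun n => le_add_of_nonneg_right (hspos (n+1)).le) hs_top
  have hv0 : Tendsto v atTop (nhds 0) := by
    simpa [hv, one_div, Pi.inv_def] using ht_top.inv_tendsto_atTop
  have hcdv : ∀ n, c n = (a (n + 1) - a n) * v n := by
    intro n
    have h0 : a (n+1) - a n = (s (n+1) - s n) * t n := by
      rw [← hsq n, ← hsq (n+1)]; simp only [ht]; ring
    rw [hv]
    rw [h0]
    field_simp [(htpos n).ne']
    rfl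
  have hc_bv : BoundedVariation c := by
    have := bv_mul hdiff hv_bv
    exact this.congr fun n => by simp only [hcdv]
  have hc0 : Tendsto c atTop (nhds 0) := by
    obtain ⟨L, hL⟩ := bv_tendsto hdiff
    have : Tendsto (fun n => (a (n+1) - a n) * v n) atTop (nhds (L * 0)) :=
      hL.mul hv0
    rw [mul_zero] at this
    exact this.congr fun n => (hcdv n).symm
  set q : ℕ → ℝ := fun n => c n * u (n + 1) with hq
  have hq_bv : BoundedVariation q := bv_mul hc_bv (bv_shift hu_bv)
  have hq0 : Tendsto q atTop (nhds 0) := by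
    have := hc0.mul (hu0.comp (tendsto_add_atTop_nat 1))
    simpa using this
  set r : ℕ → ℝ := fun n => 1 - q n with hr
  have hr_bv : BoundedVariation r :=
    hq_bv.congr fun n => by
      rw [show r (n+1) - r n = -(q (n+1) - q n) by simp only [hr]; ring, abs_neg]
  have hr1 : Tendsto r atTop (nhds 1) := by
    have := tendsto_const_nhds (x := (1:ℝ)) (f := atTop).sub hq0
    simpa [hr] using this
  have hb : ∀ n, a n * (1 / Real.sqrt (a n) - 1 / Real.sqrt (a (n + 1))) = c n * r n := by
    intro n
    have h1 : Real.sqrt (a n) = s n := rfl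
    have h2 : Real.sqrt (a (n+1)) = s (n+1) := rfl
    rw [h1, h2, ← hsq n]
    simp only [hr, hq, hc, hu]
    field_simp [(hspos n).ne', (hspos (n+1)).ne']
    try ring
  constructor
  · exact (bv_mul hc_bv hr_bv).congr fun n => by simp only [hb]
  · have : Tendsto (fun n => c n * r n) atTop (nhds (0 * 1)) := hc0.mul hr1
    rw [zero_mul] at this
    exact this.congr fun n => (hb n).symm
end
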